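/- For an Eulerian flow j on a finite graph, if the stochasticity S_x := j_x^2 − ∑_y j_{x,y}^2 vanishes at every vertex x, then the associated stochastic matrix q (with q^x_y = j_{x,y}/j_x for j_x>0, identity rows otherwise) is a permutation matrix of X. -/
import Mathlib


/-- For an Eulerian flow `j` on a finite graph whose stochasticity
`S_x = j_x^2 − ∑_y j_{x,y}^2` vanishes at every vertex, the associated stochastic
matrix `q` is a permutation matrix. -/
theorem eulerian_flow_zero_stochasticity_permutation
    {X : Type*} [Fintype X] [DecidableEq X] (j : X → X → ℕ)
    (heul : ∀ x, ∑ y, j x y = ∑ y, j y x)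
    (hflow : ∀ x y, j x y * j y x = 0)
    (hS : ∀ x, (∑ y, j x y) ^ 2 = ∑ y, (j x y) ^ 2)
    (q : Matrix X X ℝ)
    (hq : ∀ x y, q x y =
      if 0 < ∑ z, j x z then (j x y : ℝ) / ((∑ z, j x z : ℕ) : ℝ)
      else if x = y then 1 else 0) :
    ∃ σ : Equiv.Perm X, ∀ x y, q x y = if σ x = y then 1 else 0 := by
  classical
  -- at most one nonzero entry per row
  have hrow : ∀ x y z, y ≠ z → j x y * j x z = 0 := by
    intro x y z hyz
    have h1 : (∑ w, j x w) ^ 2 = ∑ a : X, ∑ b : X, j x a * j x b := by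
      rw [sq, Finset.sum_mul_sum]
    have h2 : ∀ a : X, (∑ b : X, j x a * j x b)
        = j x a ^ 2 + ∑ b ∈ Finset.univ.erase a, j x a * j x b := by
      intro a
      rw [sq, ← Finset.add_sum_erase Finset.univ (fun b => j x a * j x b) (Finset.mem_univ a)]
    rw [Finset.sum_congr rfl (fun a _ => h2 a), Finset.sum_add_distrib, hS x] at h1
    have key : ∑ a : X, ∑ b ∈ Finset.univ.erase a, j x a * j x b = 0 := by omega
    have k1 : ∑ b ∈ Finset.univ.erase y, j x y * j x b = 0 :=
      (Finset.sum_eq_zero_iff.mp key) y (Finset.mem_univ y)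
    exact (Finset.sum_eq_zero_iff.mp k1) z (Finset.mem_erase.mpr ⟨hyz.symm, Finset.mem_univ z⟩)
  set f : X → X := fun x => if h : ∃ y, j x y ≠ 0 then h.choose else x with hf
  have hfspec : ∀ x, (∃ y, j x y ≠ 0) → j x (f x) ≠ 0 := by
    intro x h
    simp only [hf, dif_pos h]
    exact h.choose_spec
  have huniq : ∀ x y, j x y ≠ 0 → y = f x := by
    intro x y hy
    have h : ∃ y, j x y ≠ 0 := ⟨y, hy⟩
    by_contra hne
    have := hrow x y (f x) hne
    exact (Nat.mul_eq_zero.mp this).elim hy (hfspec x h)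
  have hval : ∀ x, 0 < ∑ z, j x z → j x (f x) = ∑ z, j x z := by
    intro x hx
    symm
    apply Finset.sum_eq_single (f x)
    · intro b _ hb
      by_contra hb0
      exact hb (huniq x b hb0)
    · intro h; exact absurd (Finset.mem_univ (f x)) h
  set g : X → X := fun x => if 0 < ∑ z, j x z then f x else x with hg
  have hsurj : Function.Surjective g := by
    intro x
    by_cases hx : 0 < ∑ z, j x z
    · have hin : 0 < ∑ z, j z x := by rw [← heul x]; exact hx
      have hz : ∃ z, j z x ≠ 0 := by
        by_contra hc
        push_neg at hc
        simp [hc] at hin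
      obtain ⟨z, hz⟩ := hz
      have hzp : 0 < ∑ w, j z w := by
        have : j z x ≤ ∑ w, j z w :=
          Finset.single_le_sum (fun w _ => Nat.zero_le _) (Finset.mem_univ x)
        omega
      refine ⟨z, ?_⟩
      simp only [hg, if_pos hzp]
      exact (huniq z x hz).symm
    · exact ⟨x, by simp [hg, hx]⟩
  have hbij : Function.Bijective g := ⟨Finite.injective_iff_surjective.mpr hsurj, hsurj⟩
  refine ⟨Equiv.ofBijective g hbij, ?_⟩
  intro x y
  rw [hq]
  have hgx : (Equiv.ofBijective g hbij) x = g x := rfl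
  by_cases hx : 0 < ∑ z, j x z
  · rw [if_pos hx, hgx]
    have hgfx : g x = f x := if_pos hx
    rw [hgfx]
    by_cases hy : f x = y
    · rw [if_pos hy, ← hy, hval x hx]
      have : ((∑ z, j x z : ℕ) : ℝ) ≠ 0 := by
        exact_mod_cast Nat.pos_iff_ne_zero.mp hx
      exact div_self this
    · rw [if_neg hy]
      have : j x y = 0 := by
        by_contra h0
        exact hy (huniq x y h0).symm
      simp [this]
  · rw [if_neg hx, hgx]
    have : g x = x := if_neg hx
    rw [this]
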